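/- Let $\Delta$ be the simplicial complex on $\{x_1,\dots,x_n\}\cup\{y_1,\dots,y_m\}$ whose facets are $\bigcup_{k=1}^{s'}\mathcal{F}_k$, where $\mathcal{F}_k$ consists of all subsets with exactly $q(k)$ $x$-vertices and $r(k)$ $y$-vertices, $q(1)<\dots<q(s')\le n$, $r(1)>\dots>r(s')\ge 0$. If $r(i+1)=r(i)-1$ for all $i=1,\dots,s'-1$, then $\Delta$ is shellable. -/

import Mathlib

/-- Number of `x`-vertices of a subset of `{x_1,…,x_n} ∪ {y_1,…,y_m}`. -/
def xcard {n m : ℕ} (F : Finset (Fin n ⊕ Fin m)) : ℕ :=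
  (F.filter fun v => v.isLeft).card

/-- Number of `y`-vertices of a subset of `{x_1,…,x_n} ∪ {y_1,…,y_m}`. -/
def ycard {n m : ℕ} (F : Finset (Fin n ⊕ Fin m)) : ℕ :=
  (F.filter fun v => v.isRight).card

/-- The facets of the complex: `⋃_{k=1}^{s'} 𝓕_k`, where `𝓕_k` is the family
of all subsets with exactly `q(k)` `x`-vertices and `r(k)` `y`-vertices. -/
def famFacets (n m s' : ℕ) (qv rv : ℕ → ℕ) : Set (Finset (Fin n ⊕ Fin m)) :=
  {F | ∃ k, 1 ≤ k ∧ k ≤ s' ∧ xcard F = qv k ∧ ycard F = rv k}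

/-- A (not necessarily pure) set of facets is shellable if the facets can be
linearly ordered `F_1,…,F_t` such that for all `a < b` there exist
`v ∈ F_b \ F_a` and `c < b` with `F_b \ F_c = {v}`. -/
def Shellable {n m : ℕ} (Fac : Set (Finset (Fin n ⊕ Fin m))) : Prop :=
  ∃ (t : ℕ) (ord : Fin t → Finset (Fin n ⊕ Fin m)),
    Function.Injective ord ∧ (∀ a, ord a ∈ Fac) ∧ (∀ F ∈ Fac, ∃ a, ord a = F) ∧
    ∀ a b : Fin t, a < b →
      ∃ v ∈ ord b \ ord a, ∃ c, c < b ∧ ord b \ ord c = {v}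

open Finset

namespace ShellAux

/-- Injection of the vertex set into ℕ. -/
def vord {n m : ℕ} : Fin n ⊕ Fin m → ℕ := Sum.elim (fun i => (i : ℕ)) (fun j => n + j)

lemma vord_inj {n m : ℕ} : Function.Injective (vord (n := n) (m := m)) := by
  rintro (a | a) (b | b) h <;> simp [vord] at h <;>
    first
      | (exact congrArg Sum.inl (Fin.ext h))
      | (exact congrArg Sum.inr (Fin.ext (by omega)))
      | (exact absurd h (by omega))
      | (exact absurd h.symm (by have := a.isLt; omega))
      | (exact absurd h (by have := a.isLt; omega))

variable {α : Type*} [DecidableEq α]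

lemma exists_mem_sdiff_of_card_lt {s t : Finset α} (h : s.card < t.card) :
    ∃ v ∈ t, v ∉ s := by
  by_contra hc
  push_neg at hc
  exact absurd (card_le_card hc) (by omega)

lemma exists_mem_sdiff_of_card_eq {s t : Finset α} (h : s.card = t.card) {v : α}
    (hv : v ∈ t) (hvs : v ∉ s) : ∃ u ∈ s, u ∉ t := by
  by_contra hc
  push_neg at hc
  have hst : s = t := eq_of_subset_of_card_le hc (le_of_eq h.symm)
  exact hvs (hst ▸ hv)

lemma sdiff_erase_union {v : α} {t X : Finset α} (hv : v ∈ t) (hX : ∀ x ∈ X, x ∉ t) :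
    t \ ((t.erase v) ∪ X) = {v} := by
  ext a
  simp only [mem_sdiff, mem_union, mem_erase, mem_singleton]
  constructor
  · rintro ⟨hat, hno⟩
    by_contra hne
    exact hno (Or.inl ⟨hne, hat⟩)
  · rintro rfl
    exact ⟨hv, by rintro (⟨h1, -⟩ | h2); exact h1 rfl; exact hX _ h2 hv⟩

lemma filter_card_erase_union (p : α → Prop) [DecidablePred p] {v : α} {t X : Finset α}
    (hv : v ∈ t) (hX : ∀ x ∈ X, x ∉ t) :
    (((t.erase v) ∪ X).filter p).card
      = (t.filter p).card - (if p v then 1 else 0) + (X.filter p).card := by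
  rw [filter_union, filter_erase, card_union_of_disjoint]
  · by_cases hpv : p v
    · rw [card_erase_of_mem (mem_filter.2 ⟨hv, hpv⟩), if_pos hpv]
    · rw [erase_eq_of_notMem (fun hm => hpv (mem_filter.1 hm).2), if_neg hpv, Nat.sub_zero]
  · rw [disjoint_right]
    intro a haX hae
    exact hX a (mem_filter.1 haX).1 (mem_filter.1 (mem_of_mem_erase hae)).1

lemma filter_card_swap (p : α → Prop) [DecidablePred p] {u v : α} {t : Finset α}
    (hu : u ∉ t) (hv : v ∈ t) (hpv : p u ↔ p v) :
    (((t.erase v) ∪ {u}).filter p).card = (t.filter p).card := by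
  rw [filter_card_erase_union p hv (by simpa using hu)]
  by_cases h : p v
  · have h1 : v ∈ t.filter p := mem_filter.2 ⟨hv, h⟩
    have h2 : 1 ≤ (t.filter p).card := card_pos.2 ⟨v, h1⟩
    rw [if_pos h, filter_singleton, if_pos (hpv.2 h), card_singleton]
    omega
  · rw [if_neg h, filter_singleton, if_neg (fun hh => h (hpv.1 hh)), card_empty]
    omega

lemma toColex_lt_of_swap {β : Type*} [LinearOrder β] [DecidableEq β] {u v : β} {t : Finset β}
    (hu : u ∉ t) (hv : v ∈ t) (huv : u < v) :
    toColex ((t.erase v) ∪ {u}) < toColex t := by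
  rw [Colex.toColex_lt_toColex_iff_exists_forall_lt]
  refine ⟨v, hv, ?_, ?_⟩
  · simp only [mem_union, mem_erase, mem_singleton]
    rintro (⟨h1, -⟩ | h2)
    · exact h1 rfl
    · exact absurd h2 (ne_of_gt huv)
  · intro b hb hbt
    rcases mem_union.1 hb with h | h
    · exact absurd (mem_of_mem_erase h) hbt
    · rw [mem_singleton] at h; subst h; exact huv

lemma case2_tail {n m : ℕ} {Fb : Finset (Fin n ⊕ Fin m)} {u v : Fin n ⊕ Fin m}
    (hvb : v ∈ Fb) (hub : u ∉ Fb)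
    (hL : u.isLeft = v.isLeft) (huv : vord u < vord v) :
    xcard ((Fb.erase v) ∪ {u}) = xcard Fb ∧ ycard ((Fb.erase v) ∪ {u}) = ycard Fb ∧
    Fb \ ((Fb.erase v) ∪ {u}) = {v} ∧
    toColex (((Fb.erase v) ∪ {u}).image vord) < toColex (Fb.image vord) := by
  have hR : u.isRight = v.isRight := by
    rcases u with a | a <;> rcases v with b | b <;> simp_all
  refine ⟨?_, ?_, ?_, ?_⟩
  · unfold xcard
    exact filter_card_swap _ hub hvb (by rw [hL])
  · unfold ycard
    exact filter_card_swap _ hub hvb (by rw [hR])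
  · exact sdiff_erase_union hvb (by simpa using hub)
  · have himg : ((Fb.erase v) ∪ {u}).image vord
        = (((Fb.image vord).erase (vord v)) ∪ {vord u}) := by
      rw [image_union, image_erase vord_inj, image_singleton]
    rw [himg]
    refine toColex_lt_of_swap ?_ (mem_image_of_mem _ hvb) huv
    simp only [mem_image]
    rintro ⟨w, hw, hwu⟩
    exact hub (vord_inj hwu ▸ hw)

lemma card_left_univ (n m : ℕ) :
    (((Finset.univ : Finset (Fin n ⊕ Fin m))).filter (fun w => w.isLeft)).card = n := by
  have h : ((Finset.univ : Finset (Fin n ⊕ Fin m))).filter (fun w => w.isLeft)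
      = Finset.univ.map ⟨Sum.inl, Sum.inl_injective⟩ := by
    ext w
    rcases w with i | j <;> simp
  rw [h, card_map, card_univ, Fintype.card_fin]

lemma exists_right_of_ycard_lt {n m : ℕ} {Fa Fb : Finset (Fin n ⊕ Fin m)}
    (h : ycard Fa < ycard Fb) : ∃ v, v ∈ Fb ∧ v ∉ Fa ∧ v.isRight = true := by
  unfold ycard at h
  obtain ⟨v, hv1, hv2⟩ := exists_mem_sdiff_of_card_lt h
  obtain ⟨hvb, hvR⟩ := mem_filter.1 hv1
  exact ⟨v, hvb, fun hh => hv2 (mem_filter.2 ⟨hh, hvR⟩), hvR⟩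

lemma exists_left_swap_of_xcard_eq {n m : ℕ} {Fa Fb : Finset (Fin n ⊕ Fin m)}
    (h : xcard Fa = xcard Fb) {v} (hvb : v ∈ Fb) (hva : v ∉ Fa) (hvL : v.isLeft = true) :
    ∃ u, u ∈ Fa ∧ u ∉ Fb ∧ u.isLeft = true := by
  unfold xcard at h
  have h1 : v ∈ Fb.filter (fun w => w.isLeft) := mem_filter.2 ⟨hvb, hvL⟩
  have h2 : v ∉ Fa.filter (fun w => w.isLeft) := fun hh => hva (mem_filter.1 hh).1
  obtain ⟨u, hu1, hu2⟩ := exists_mem_sdiff_of_card_eq h h1 h2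
  obtain ⟨huFa, huL⟩ := mem_filter.1 hu1
  exact ⟨u, huFa, fun hh => hu2 (mem_filter.2 ⟨hh, huL⟩), huL⟩

lemma exists_right_swap_of_ycard_eq {n m : ℕ} {Fa Fb : Finset (Fin n ⊕ Fin m)}
    (h : ycard Fa = ycard Fb) {v} (hvb : v ∈ Fb) (hva : v ∉ Fa) (hvR : v.isRight = true) :
    ∃ u, u ∈ Fa ∧ u ∉ Fb ∧ u.isRight = true := by
  unfold ycard at h
  have h1 : v ∈ Fb.filter (fun w => w.isRight) := mem_filter.2 ⟨hvb, hvR⟩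
  have h2 : v ∉ Fa.filter (fun w => w.isRight) := fun hh => hva (mem_filter.1 hh).1
  obtain ⟨u, hu1, hu2⟩ := exists_mem_sdiff_of_card_eq h h1 h2
  obtain ⟨huFa, huR⟩ := mem_filter.1 hu1
  exact ⟨u, huFa, fun hh => hu2 (mem_filter.2 ⟨hh, huR⟩), huR⟩

lemma exists_fresh_lefts {n m : ℕ} (Fb : Finset (Fin n ⊕ Fin m)) (j : ℕ)
    (hj : j + xcard Fb ≤ n) :
    ∃ X' : Finset (Fin n ⊕ Fin m), X'.card = j ∧ (∀ x ∈ X', x ∉ Fb) ∧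
      (∀ x ∈ X', x.isLeft = true) := by
  have h2 : ((Finset.univ : Finset (Fin n ⊕ Fin m)).filter (fun w => w.isLeft)) ∩ Fb
      = Fb.filter (fun w => w.isLeft) := by
    ext w
    simp [Finset.mem_filter, and_comm]
  have h4 := Finset.card_sdiff_add_card_inter
    ((Finset.univ : Finset (Fin n ⊕ Fin m)).filter (fun w => w.isLeft)) Fb
  rw [h2] at h4
  have h6 := card_left_univ n m
  have h5 : (Fb.filter (fun w => w.isLeft)).card = xcard Fb := rfl
  obtain ⟨X', hX'sub, hX'card⟩ := Finset.exists_subset_card_eq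
    (s := ((Finset.univ : Finset (Fin n ⊕ Fin m)).filter (fun w => w.isLeft)) \ Fb) (n := j) (by omega)
  exact ⟨X', hX'card, fun x hx => (Finset.mem_sdiff.1 (hX'sub hx)).2,
    fun x hx => (Finset.mem_filter.1 (Finset.mem_sdiff.1 (hX'sub hx)).1).2⟩

lemma caseA_counts {n m : ℕ} {Fb X' : Finset (Fin n ⊕ Fin m)} {v}
    (hvb : v ∈ Fb) (hvR : v.isRight = true)
    (hX'Fb : ∀ x ∈ X', x ∉ Fb) (hX'L : ∀ x ∈ X', x.isLeft = true) :
    xcard ((Fb.erase v) ∪ X') = xcard Fb + X'.card ∧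
    ycard ((Fb.erase v) ∪ X') + 1 = ycard Fb ∧
    Fb \ ((Fb.erase v) ∪ X') = {v} := by
  have hvL : ¬ (v.isLeft = true) := by rcases v with i | j <;> simp_all
  refine ⟨?_, ?_, sdiff_erase_union hvb hX'Fb⟩
  · unfold xcard
    rw [filter_card_erase_union _ hvb hX'Fb, if_neg hvL, filter_eq_self.2 hX'L]
    omega
  · unfold ycard
    rw [filter_card_erase_union _ hvb hX'Fb, if_pos hvR,
      (Finset.filter_eq_empty_iff (s := X')).2 (fun x hx hxR => by
        have := hX'L x hx
        rcases x with i | j <;> simp_all), card_empty]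
    have hm : v ∈ Fb.filter (fun w => w.isRight) := mem_filter.2 ⟨hvb, hvR⟩
    have hp := card_pos.2 ⟨v, hm⟩
    omega

end ShellAux


open ShellAux Finset

/-- (Lemma 3.11.)  If `r(i+1) = r(i) - 1` for `i = 1,…,s·-1`, then the complex
with facets `⋃_{k=1}^{s'} 𝓕_k` is shellable. -/
theorem shellable_of_r_consecutive (n m s' : ℕ) (qv rv : ℕ → ℕ)
    (hq : ∀ i j, 1 ≤ i → i < j → j ≤ s' → qv i < qv j)
    (hr : ∀ i j, 1 ≤ i → i < j → j ≤ s' → rv j < rv i)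
    (hqn : qv s' ≤ n)
    (hstep : ∀ i, 1 ≤ i → i < s' → rv i = rv (i + 1) + 1) :
    Shellable (famFacets n m s' qv rv) := by
  classical
  have hqle : ∀ k, 1 ≤ k → k ≤ s' → qv k ≤ n := by
    intro k h1 h2
    rcases eq_or_lt_of_le h2 with rfl | h
    · exact hqn
    · exact le_of_lt (lt_of_lt_of_le (hq k s' h1 h le_rfl) hqn)
  let key : Finset (Fin n ⊕ Fin m) → ℕ ×ₗ Colex (Finset ℕ) :=
    fun F => toLex (n - xcard F, toColex (F.image vord))
  have keyinj : Function.Injective key := by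
    intro F G h
    have h2 : toColex (F.image vord) = toColex (G.image vord) :=
      congrArg (fun p => (ofLex p).2) h
    have h3 : F.image vord = G.image vord := by
      simpa using congrArg ofColex h2
    exact Finset.image_injective vord_inj h3
  set Fac := famFacets n m s' qv rv with hFacDef
  set S : Finset (Finset (Fin n ⊕ Fin m)) := Finset.univ.filter (· ∈ Fac) with hSdef
  let r : Finset (Fin n ⊕ Fin m) → Finset (Fin n ⊕ Fin m) → Prop :=
    fun F G => key F ≤ key G
  haveI : DecidableRel r := fun F G => inferInstanceAs (Decidable (key F ≤ key G))
  haveI : IsTrans _ r := ⟨fun _ _ _ h1 h2 => le_trans h1 h2⟩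
  haveI : IsAntisymm _ r := ⟨fun _ _ h1 h2 => keyinj (le_antisymm h1 h2)⟩
  haveI : IsTotal _ r := ⟨fun a b => le_total (key a) (key b)⟩
  set lst := S.sort r with hlstdef
  have hlen : lst.length = S.card := Finset.length_sort r
  have hnd : lst.Nodup := Finset.sort_nodup S r
  have hmemlst : ∀ F, F ∈ lst ↔ F ∈ S := fun F => Finset.mem_sort r
  have hsorted : lst.Pairwise r := Finset.pairwise_sort S r
  have hstrict : ∀ i j : Fin lst.length, (i : ℕ) < (j : ℕ) →
      key (lst.get i) < key (lst.get j) := by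
    intro i j hij
    have hle : r (lst.get i) (lst.get j) := hsorted.rel_get_of_lt hij
    have hne : lst.get i ≠ lst.get j := by
      intro hgg
      have := (List.Nodup.get_inj_iff hnd).1 hgg
      exact absurd (congrArg Fin.val this) (by omega)
    exact lt_of_le_of_ne hle (fun hk => hne (keyinj hk))
  have hlen' : ∀ a : Fin S.card, (a : ℕ) < lst.length := fun a => by
    rw [hlen]; exact a.2
  let ord : Fin S.card → Finset (Fin n ⊕ Fin m) := fun a => lst.get ⟨a.1, hlen' a⟩
  have hordFac : ∀ a, ord a ∈ Fac := fun a =>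
    (Finset.mem_filter.1 ((hmemlst _).1 (lst.get_mem _))).2
  refine ⟨S.card, ord, ?_, hordFac, ?_, ?_⟩
  · intro a b h
    have h2 := (List.Nodup.get_inj_iff hnd).1 h
    injection h2 with h3
    exact Fin.ext h3
  · intro F hF
    have hFl : F ∈ lst := (hmemlst F).2 (Finset.mem_filter.2 ⟨Finset.mem_univ _, hF⟩)
    obtain ⟨i, hi⟩ := List.mem_iff_get.1 hFl
    refine ⟨⟨i.1, by rw [← hlen]; exact i.2⟩, ?_⟩
    show lst.get _ = F
    rw [← hi]
  · intro a b hab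
    set ia : Fin lst.length := ⟨a.1, hlen' a⟩ with hiadef
    set ib : Fin lst.length := ⟨b.1, hlen' b⟩ with hibdef
    set Fa := lst.get ia with hFadef
    set Fb := lst.get ib with hFbdef
    have hFaFac : Fa ∈ Fac := hordFac a
    have hFbFac : Fb ∈ Fac := hordFac b
    obtain ⟨ka, hka1, hkas, hxa, hya⟩ := hFaFac
    obtain ⟨kb, hkb1, hkbs, hxb, hyb⟩ := hFbFac
    have hlt : key Fa < key Fb := hstrict ia ib hab
    have hfind : ∀ Fc : Finset (Fin n ⊕ Fin m), Fc ∈ Fac → key Fc < key Fb →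
        ∃ c : Fin S.card, c < b ∧ ord c = Fc := by
      intro Fc hFcFac hkey
      have hFcl : Fc ∈ lst := (hmemlst Fc).2 (Finset.mem_filter.2 ⟨Finset.mem_univ _, hFcFac⟩)
      obtain ⟨ic, hic⟩ := List.mem_iff_get.1 hFcl
      have hcb : (ic : ℕ) < (b : ℕ) := by
        rcases lt_trichotomy (ic : ℕ) ((ib : ℕ)) with h | h | h
        · exact h
        · have hgg : lst.get ic = lst.get ib := by
            congr 1
            exact Fin.ext h
          rw [hic] at hgg
          rw [hgg] at hkey
          exact absurd hkey (lt_irrefl _)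
        · have h2 := hstrict ib ic h
          rw [hic] at h2
          exact absurd (hkey.trans h2) (lt_irrefl _)
      refine ⟨⟨ic.1, by omega⟩, hcb, ?_⟩
      show lst.get _ = Fc
      rw [← hic]
    rcases Prod.Lex.lt_iff.1 hlt with hcase | ⟨heq, hcolex⟩
    · -- Case A: different classes, kb < ka
      dsimp only [key, ofLex_toLex] at hcase
      have hxan : qv ka ≤ n := hqle ka hka1 hkas
      have hxbn : qv kb ≤ n := hqle kb hkb1 hkbs
      have hba : qv kb < qv ka := by rw [hxa, hxb] at hcase; omega
      have hkba : kb < ka := by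
        rcases lt_trichotomy kb ka with h | h | h
        · exact h
        · subst h; omega
        · exact absurd (hq ka kb hka1 h hkbs) (by omega)
      have hkb1s : kb + 1 ≤ s' := by omega
      have hq1 : qv kb < qv (kb + 1) := hq kb (kb + 1) hkb1 (by omega) hkb1s
      have hq2 : qv (kb + 1) ≤ n := hqle (kb + 1) (by omega) hkb1s
      have hrba : rv ka < rv kb := hr kb ka hkb1 hkba hkas
      have hcards : ycard Fa < ycard Fb := by
        rw [hya, hyb]
        exact hrba
      obtain ⟨v, hvb, hva, hvR⟩ := exists_right_of_ycard_lt hcards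
      obtain ⟨X', hX'card, hX'Fb, hX'L⟩ := exists_fresh_lefts Fb (qv (kb + 1) - qv kb)
        (by have h5 : xcard Fb = qv kb := hxb; omega)
      obtain ⟨hxc', hyc', hsd⟩ := caseA_counts hvb hvR hX'Fb hX'L
      set Fc := (Fb.erase v) ∪ X' with hFcdef
      have hxc : xcard Fc = qv (kb + 1) := by
        have h5 : xcard Fb = qv kb := hxb
        omega
      have hyc : ycard Fc = rv (kb + 1) := by
        have h5 : ycard Fb = rv kb := hyb
        have h6 := hstep kb hkb1 (by omega)
        omega
      have hFcFac : Fc ∈ Fac := ⟨kb + 1, by omega, hkb1s, hxc, hyc⟩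
      have hkey : key Fc < key Fb := Prod.Lex.lt_iff.2 (Or.inl (by
        dsimp only [key, ofLex_toLex]
        have h5 : xcard Fb = qv kb := hxb
        rw [hxc, h5]
        omega))
      obtain ⟨c, hcb, hco⟩ := hfind Fc hFcFac hkey
      exact ⟨v, Finset.mem_sdiff.2 ⟨hvb, hva⟩, c, hcb, by rw [hco]; exact hsd⟩
    · -- Case B: same class, colex comparison
      dsimp only [key, ofLex_toLex] at heq hcolex
      have hxan : qv ka ≤ n := hqle ka hka1 hkas
      have hxbn : qv kb ≤ n := hqle kb hkb1 hkbs
      have hxab : xcard Fa = xcard Fb := by rw [hxa, hxb]; rw [hxa, hxb] at heq; omega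
      have hqq : qv ka = qv kb := by rw [← hxa, ← hxb]; exact hxab
      have hkab : ka = kb := by
        rcases lt_trichotomy ka kb with h | h | h
        · exact absurd (hq ka kb hka1 h hkbs) (by omega)
        · exact h
        · exact absurd (hq kb ka hkb1 h hkas) (by omega)
      have hyab : ycard Fa = ycard Fb := by rw [hya, hyb, hkab]
      rw [Colex.toColex_lt_toColex_iff_exists_forall_lt] at hcolex
      obtain ⟨a', ha'b, ha'a, hmax⟩ := hcolex
      obtain ⟨v, hvb, rfl⟩ := Finset.mem_image.1 ha'b
      have hva : v ∉ Fa := fun h => ha'a (Finset.mem_image_of_mem _ h)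
      have hmax' : ∀ u ∈ Fa, u ∉ Fb → vord u < vord v := by
        intro u hu hub
        refine hmax _ (Finset.mem_image_of_mem _ hu) ?_
        simp only [Finset.mem_image]
        rintro ⟨w, hw, hwe⟩
        exact hub (vord_inj hwe ▸ hw)
      have hgetu : ∃ u, u ∈ Fa ∧ u ∉ Fb ∧ u.isLeft = v.isLeft := by
        by_cases hvL : v.isLeft = true
        · obtain ⟨u, h1', h2', h3'⟩ := exists_left_swap_of_xcard_eq hxab hvb hva hvL
          exact ⟨u, h1', h2', by rw [h3', hvL]⟩
        · have hvR : v.isRight = true := by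
            rcases v with i | j
            · exact absurd rfl hvL
            · rfl
          obtain ⟨u, h1', h2', h3'⟩ := exists_right_swap_of_ycard_eq hyab hvb hva hvR
          refine ⟨u, h1', h2', ?_⟩
          rcases u with i | j
          · simp at h3'
          · rcases v with i' | j'
            · simp at hvR
            · rfl
      obtain ⟨u, hua, hub, hside⟩ := hgetu
      have huv := hmax' u hua hub
      obtain ⟨hxc, hyc, hsd, hclex⟩ := case2_tail hvb hub hside huv
      set Fc := (Fb.erase v) ∪ {u} with hFcdef
      have hFcFac : Fc ∈ Fac := ⟨kb, hkb1, hkbs, by rw [hxc]; exact hxb, by rw [hyc]; exact hyb⟩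
      have hkey : key Fc < key Fb := Prod.Lex.lt_iff.2 (Or.inr
        ⟨by dsimp only [key, ofLex_toLex]; rw [hxc], hclex⟩)
      obtain ⟨c, hcb, hco⟩ := hfind Fc hFcFac hkey
      exact ⟨v, Finset.mem_sdiff.2 ⟨hvb, hva⟩, c, hcb, by rw [hco]; exact hsd⟩
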